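/- Assume H1 and H2 hold. Then lim_{z→∞} (∫_z^∞ e^{γ(y)} (∫_y^∞ e^{-γ(ξ)} dξ)² dy) / (e^{2γ(z)} (∫_z^∞ e^{-γ(ξ)} dξ)³) = 1. -/

import Mathlib

open MeasureTheory Real Filter Topology

noncomputable def Tl (γ : ℝ → ℝ) (z : ℝ) : ℝ := ∫ ξ in Set.Ioi z, Real.exp (-(γ ξ))
noncomputable def Nl (γ : ℝ → ℝ) (z : ℝ) : ℝ := ∫ y in Set.Ioi z, Real.exp (γ y) * Tl γ y ^ 2
noncomputable def Dl (γ : ℝ → ℝ) (z : ℝ) : ℝ := Real.exp (2 * γ z) * Tl γ z ^ 3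

lemma tail_split {f : ℝ → ℝ} {a z : ℝ} (haz : a ≤ z)
    (hfi : IntegrableOn f (Set.Ioi a)) :
    ∫ x in Set.Ioi a, f x = (∫ x in a..z, f x) + ∫ x in Set.Ioi z, f x := by
  rw [intervalIntegral.integral_of_le haz,
    ← setIntegral_union (Set.Ioc_disjoint_Ioi le_rfl) measurableSet_Ioi
      (hfi.mono_set Set.Ioc_subset_Ioi_self) (hfi.mono_set (Set.Ioi_subset_Ioi haz)),
    Set.Ioc_union_Ioi_eq_Ioi haz]

lemma tail_hasDerivAt {f : ℝ → ℝ} {a z : ℝ} (hza : a < z) (hf : Continuous f)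
    (hfi : IntegrableOn f (Set.Ioi a)) :
    HasDerivAt (fun w => ∫ x in Set.Ioi w, f x) (-(f z)) z := by
  have h1 : HasDerivAt (fun w => (∫ x in Set.Ioi a, f x) - ∫ x in a..w, f x) (-(f z)) z := by
    simpa using ((intervalIntegral.integral_hasDerivAt_right
      (hf.intervalIntegrable a z) (hf.stronglyMeasurable.stronglyMeasurableAtFilter)
      hf.continuousAt)).const_sub (∫ x in Set.Ioi a, f x)
  refine h1.congr_of_eventuallyEq ?_
  filter_upwards [Ioi_mem_nhds hza] with w hw
  have := tail_split (le_of_lt hw) hfi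
  linarith

lemma tail_tendsto_zero {f : ℝ → ℝ} {a : ℝ} (hfi : IntegrableOn f (Set.Ioi a)) :
    Tendsto (fun z => ∫ x in Set.Ioi z, f x) atTop (𝓝 0) := by
  have h := MeasureTheory.intervalIntegral_tendsto_integral_Ioi a hfi tendsto_id
  have h2 : Tendsto (fun z => (∫ x in Set.Ioi a, f x) - ∫ x in a..z, f x) atTop
      (𝓝 ((∫ x in Set.Ioi a, f x) - ∫ x in Set.Ioi a, f x)) := tendsto_const_nhds.sub h
  rw [sub_self] at h2
  refine h2.congr' ?_
  filter_upwards [eventually_ge_atTop a] with z hz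
  have := tail_split hz hfi
  linarith

lemma integrableOn_Ioi_of_cont {f : ℝ → ℝ} {M : ℝ} (hf : Continuous f)
    (hM : IntegrableOn f (Set.Ioi M)) (a : ℝ) : IntegrableOn f (Set.Ioi a) := by
  rcases le_total M a with h | h
  · exact hM.mono_set (Set.Ioi_subset_Ioi h)
  · rw [← Set.Ioc_union_Ioi_eq_Ioi h]
    exact ((hf.integrableOn_Icc).mono_set Set.Ioc_subset_Icc_self).union hM

/-- Under H1 and H2,
(∫_z^∞ e^{γ(y)} (∫_y^∞ e^{-γ(ξ)} dξ)² dy) / (e^{2γ(z)} (∫_z^∞ e^{-γ(ξ)} dξ)³) → 1. -/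
theorem tail_square_ratio_tendsto_one
    (q γ : ℝ → ℝ)
    (hq : ContDiff ℝ 1 q)
    (hγ : ∀ y, γ y = 2 * ∫ t in (0:ℝ)..y, q t)
    (H1 : ∫⁻ y in Set.Ioi (0:ℝ),
        ENNReal.ofReal (Real.exp (γ y)) *
          ∫⁻ z in Set.Ioi y, ENNReal.ofReal (Real.exp (-(γ z))) < ⊤)
    (H2a : Tendsto q atTop atTop)
    (H2b : Tendsto (fun x => deriv q x / q x ^ 2) atTop (nhds 0)) :
    Tendsto
      (fun z =>
        (∫ y in Set.Ioi z,
            Real.exp (γ y) * (∫ ξ in Set.Ioi y, Real.exp (-(γ ξ))) ^ 2) /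
          (Real.exp (2 * γ z) * (∫ ξ in Set.Ioi z, Real.exp (-(γ ξ))) ^ 3))
      atTop (nhds 1) := by
  show Tendsto (fun z => Nl γ z / Dl γ z) atTop (nhds 1)
  have hqc : Continuous q := hq.continuous
  have hq_diff : Differentiable ℝ q := hq.differentiable one_ne_zero
  have hγd : ∀ y, HasDerivAt γ (2 * q y) y := by
    intro y
    have h0 : HasDerivAt (fun u => ∫ t in (0:ℝ)..u, q t) (q y) y :=
      intervalIntegral.integral_hasDerivAt_right (hqc.intervalIntegrable 0 y)
        (hqc.stronglyMeasurable.stronglyMeasurableAtFilter) hqc.continuousAt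
    have := h0.const_mul (2:ℝ)
    simpa [← hγ] using this.congr_of_eventuallyEq
      (by filter_upwards with w using (hγ w))
  have hγdiff : Differentiable ℝ γ := fun y => (hγd y).differentiableAt
  have hγcont : Continuous γ := hγdiff.continuous
  have hγsub : ∀ a b : ℝ, γ b - γ a = 2 * ∫ t in a..b, q t := by
    intro a b
    rw [hγ, hγ, ← intervalIntegral.integral_add_adjacent_intervals
      (hqc.intervalIntegrable 0 a) (hqc.intervalIntegrable a b)]
    ring
  -- eventual positivity of q
  obtain ⟨M₀, hM₀⟩ := eventually_atTop.mp (H2a.eventually_ge_atTop 1)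
  set M : ℝ := max M₀ 0 with hM_def
  have hM₁ : ∀ x, M ≤ x → 1 ≤ q x := fun x hx => hM₀ x (le_trans (le_max_left _ _) hx)
  -- lower bound on γ
  have hγlb : ∀ y, M ≤ y → γ M + 2 * (y - M) ≤ γ y := by
    intro y hy
    have h1 : y - M ≤ ∫ t in M..y, q t := by
      have : y - M = ∫ _t in M..y, (1:ℝ) := by simp
      rw [this]
      exact intervalIntegral.integral_mono_on hy intervalIntegrable_const
        (hqc.intervalIntegrable M y) (fun x hx => hM₁ x hx.1)
    have := hγsub M y
    linarith
  -- integrability of exp(-γ)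
  have hf_cont : Continuous (fun ξ => Real.exp (-(γ ξ))) := Real.continuous_exp.comp hγcont.neg
  have hfM : IntegrableOn (fun ξ => Real.exp (-(γ ξ))) (Set.Ioi M) := by
    have hbound : IntegrableOn (fun y => Real.exp (2*M - γ M) * Real.exp (-2*y)) (Set.Ioi M) :=
      (exp_neg_integrableOn_Ioi M two_pos).const_mul _
    refine Integrable.mono' hbound hf_cont.aestronglyMeasurable ?_
    filter_upwards [ae_restrict_mem measurableSet_Ioi] with y hy
    rw [Real.norm_eq_abs, abs_of_pos (Real.exp_pos _), ← Real.exp_add]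
    have := hγlb y (le_of_lt hy)
    exact Real.exp_le_exp.2 (by linarith)
  have hfint : ∀ a, IntegrableOn (fun ξ => Real.exp (-(γ ξ))) (Set.Ioi a) :=
    integrableOn_Ioi_of_cont hf_cont hfM
  -- facts about T
  have hT_deriv : ∀ z, HasDerivAt (Tl γ) (-(Real.exp (-(γ z)))) z := fun z =>
    tail_hasDerivAt (by linarith : z - 1 < z) hf_cont (hfint (z-1))
  have hT_diff : Differentiable ℝ (Tl γ) := fun z => (hT_deriv z).differentiableAt
  have hT_cont : Continuous (Tl γ) := hT_diff.continuous
  have hT0 : Tendsto (Tl γ) atTop (𝓝 0) := tail_tendsto_zero (hfint 0)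
  have hT_pos : ∀ z, 0 < Tl γ z := by
    intro z
    rw [Tl, setIntegral_pos_iff_support_of_nonneg_ae
      (ae_of_all _ fun x => (Real.exp_pos _).le) (hfint z)]
    have hsupp : (Function.support fun ξ => Real.exp (-(γ ξ))) = Set.univ := by
      ext x; simp [Function.support, Real.exp_ne_zero]
    rw [hsupp, Set.univ_inter, Real.volume_Ioi]
    simp
  have hT_le : ∀ y, 0 ≤ y → Tl γ y ≤ Tl γ 0 := by
    intro y hy
    have hsplit := tail_split hy (hfint 0)
    have hnn : 0 ≤ ∫ x in (0:ℝ)..y, Real.exp (-(γ x)) :=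
      intervalIntegral.integral_nonneg hy (fun x _ => (Real.exp_pos _).le)
    simp only [Tl]; linarith
  -- integrability from H1
  have hh_int : IntegrableOn (fun y => Real.exp (γ y) * Tl γ y) (Set.Ioi 0) := by
    have hcont : Continuous (fun y => Real.exp (γ y) * Tl γ y) :=
      (Real.continuous_exp.comp hγcont).mul hT_cont
    refine ⟨hcont.aestronglyMeasurable, ?_⟩
    rw [hasFiniteIntegral_iff_ofReal (ae_of_all _ fun y =>
      mul_nonneg (Real.exp_pos _).le (hT_pos y).le)]
    have hcongr : ∀ y : ℝ, ENNReal.ofReal (Real.exp (γ y) * Tl γ y) =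
        ENNReal.ofReal (Real.exp (γ y)) *
          ∫⁻ ξ in Set.Ioi y, ENNReal.ofReal (Real.exp (-(γ ξ))) := by
      intro y
      rw [ENNReal.ofReal_mul (Real.exp_pos _).le, Tl,
        ofReal_integral_eq_lintegral_ofReal (hfint y) (ae_of_all _ fun x => (Real.exp_pos _).le)]
    calc ∫⁻ y in Set.Ioi (0:ℝ), ENNReal.ofReal (Real.exp (γ y) * Tl γ y)
        = ∫⁻ y in Set.Ioi (0:ℝ), ENNReal.ofReal (Real.exp (γ y)) *
            ∫⁻ ξ in Set.Ioi y, ENNReal.ofReal (Real.exp (-(γ ξ))) :=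
          lintegral_congr fun y => hcongr y
      _ < ⊤ := H1
  have hg_cont : Continuous (fun y => Real.exp (γ y) * Tl γ y ^ 2) :=
    (Real.continuous_exp.comp hγcont).mul (hT_cont.pow 2)
  have hg_int : IntegrableOn (fun y => Real.exp (γ y) * Tl γ y ^ 2) (Set.Ioi 0) := by
    refine Integrable.mono' (hh_int.const_mul (Tl γ 0)) hg_cont.aestronglyMeasurable ?_
    filter_upwards [ae_restrict_mem measurableSet_Ioi] with y hy
    have h1 : Tl γ y ≤ Tl γ 0 := hT_le y (le_of_lt hy)
    have h2 : 0 < Tl γ y := hT_pos y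
    have h3 : (0:ℝ) < Real.exp (γ y) := Real.exp_pos _
    rw [Real.norm_eq_abs, abs_of_pos (by positivity)]
    nlinarith [mul_le_mul_of_nonneg_left h1 (mul_pos h3 h2).le]
  -- facts about N
  have hN_deriv : ∀ z, 0 < z → HasDerivAt (Nl γ) (-(Real.exp (γ z) * Tl γ z ^ 2)) z :=
    fun z hz => tail_hasDerivAt hz hg_cont hg_int
  have hN0 : Tendsto (Nl γ) atTop (𝓝 0) := tail_tendsto_zero hg_int
  -- γ → ∞ and exp(-γ) → 0
  have hγtop : Tendsto γ atTop atTop := by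
    have hbase : Tendsto (fun y : ℝ => γ M + 2 * (y - M)) atTop atTop :=
      tendsto_atTop_add_const_left _ _
        ((tendsto_atTop_add_const_right _ (-M) tendsto_id).const_mul_atTop two_pos)
    refine tendsto_atTop_mono' atTop ?_ hbase
    filter_upwards [eventually_ge_atTop M] with y hy using hγlb y hy
  have hexp0 : Tendsto (fun z => Real.exp (-(γ z))) atTop (𝓝 0) :=
    Real.tendsto_exp_atBot.comp (tendsto_neg_atTop_atBot.comp hγtop)
  have hq_ev : ∀ᶠ z in atTop, 1 ≤ q z := eventually_atTop.2 ⟨M₀, hM₀⟩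
  -- derivative of the comparison function G = exp(-γ)/(2q)
  have hG_deriv : ∀ z, q z ≠ 0 → HasDerivAt (fun w => Real.exp (-(γ w)) / (2 * q w))
      ((Real.exp (-(γ z)) * -(2 * q z) * (2 * q z) -
        Real.exp (-(γ z)) * (2 * deriv q z)) / (2 * q z) ^ 2) z := by
    intro z hz
    exact ((hγd z).neg.exp).div ((hq_diff z).hasDerivAt.const_mul 2)
      (by simpa using hz)
  have hG0 : Tendsto (fun z => Real.exp (-(γ z)) / (2 * q z)) atTop (𝓝 0) := by
    have h2 : Tendsto (fun z => (2 * q z)⁻¹) atTop (𝓝 0) :=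
      (H2a.const_mul_atTop two_pos).inv_tendsto_atTop
    have h3 := hexp0.mul h2
    rw [mul_zero] at h3
    exact h3.congr (fun z => (div_eq_mul_inv _ _).symm)
  -- pointwise algebra for the first L'Hopital quotient
  have hkey : ∀ z, 1 ≤ q z → |deriv q z / q z ^ 2| < 1 →
      ((Real.exp (-(γ z)) * -(2 * q z) * (2 * q z) -
        Real.exp (-(γ z)) * (2 * deriv q z)) / (2 * q z) ^ 2 ≠ 0 ∧
      -Real.exp (-(γ z)) / ((Real.exp (-(γ z)) * -(2 * q z) * (2 * q z) -
        Real.exp (-(γ z)) * (2 * deriv q z)) / (2 * q z) ^ 2)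
        = 1 / (1 + deriv q z / q z ^ 2 / 2)) := by
    intro z hq1 hd
    have hQ : (0:ℝ) < q z := lt_of_lt_of_le one_pos hq1
    have hE : (0:ℝ) < Real.exp (-(γ z)) := Real.exp_pos _
    have habs := abs_lt.1 hd
    have hdgt : -(q z ^ 2) < deriv q z := by
      have := (lt_div_iff₀ (pow_pos hQ 2)).1 habs.1
      linarith
    have hpos : 0 < 4 * q z ^ 2 + 2 * deriv q z := by nlinarith
    have hden : 0 < 1 + deriv q z / q z ^ 2 / 2 := by
      have := habs.1; linarith
    have hnum : Real.exp (-(γ z)) * -(2 * q z) * (2 * q z) -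
        Real.exp (-(γ z)) * (2 * deriv q z) ≠ 0 := by
      have heq : Real.exp (-(γ z)) * -(2 * q z) * (2 * q z) -
          Real.exp (-(γ z)) * (2 * deriv q z)
          = -(Real.exp (-(γ z)) * (4 * q z ^ 2 + 2 * deriv q z)) := by ring
      rw [heq]
      exact neg_ne_zero.2 (mul_pos hE hpos).ne'
    constructor
    · exact div_ne_zero hnum (pow_ne_zero _ (by positivity))
    · rw [div_div_eq_mul_div, div_eq_div_iff hnum hden.ne']
      field_simp
      ring
  have hsmall : ∀ᶠ z in atTop, |deriv q z / q z ^ 2| < 1 := by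
    filter_upwards [H2b.eventually (Metric.ball_mem_nhds (0:ℝ) one_pos)] with z hz
    have h2 := Metric.mem_ball.mp hz
    rwa [Real.dist_eq, sub_zero] at h2
  -- first L'Hopital : T / G → 1
  have hTG : Tendsto (fun z => Tl γ z / (Real.exp (-(γ z)) / (2 * q z))) atTop (𝓝 1) := by
    refine HasDerivAt.lhopital_zero_atTop
      (f' := fun z => -Real.exp (-(γ z)))
      (g' := fun z => (Real.exp (-(γ z)) * -(2 * q z) * (2 * q z) -
        Real.exp (-(γ z)) * (2 * deriv q z)) / (2 * q z) ^ 2)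
      (Eventually.of_forall fun z => hT_deriv z) ?_ ?_ hT0 hG0 ?_
    · filter_upwards [hq_ev] with z hz
      exact hG_deriv z (by linarith)
    · filter_upwards [hq_ev, hsmall] with z h1 h2
      exact (hkey z h1 h2).1
    · have hlim : Tendsto (fun z => 1 / (1 + deriv q z / q z ^ 2 / 2)) atTop (𝓝 1) := by
        have h4 : Tendsto (fun z => 1 + deriv q z / q z ^ 2 / 2) atTop (𝓝 1) := by
          simpa using tendsto_const_nhds.add (H2b.div_const 2)
        have h5 : Tendsto (fun z => (1 + deriv q z / q z ^ 2 / 2)⁻¹) atTop (𝓝 (1:ℝ)⁻¹) :=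
          h4.inv₀ one_ne_zero
        simpa [one_div] using h5
      refine Tendsto.congr' ?_ hlim
      filter_upwards [hq_ev, hsmall] with z h1 h2
      exact ((hkey z h1 h2).2).symm
  -- hence q * e^γ * T → 1/2
  have hu : Tendsto (fun z => q z * (Real.exp (γ z) * Tl γ z)) atTop (𝓝 (1/2)) := by
    have h2 := hTG.div_const 2
    refine Tendsto.congr' ?_ h2
    filter_upwards [hq_ev] with z hz
    have hQ : q z ≠ 0 := ne_of_gt (lt_of_lt_of_le one_pos hz)
    have hE : Real.exp (-(γ z)) ≠ 0 := Real.exp_ne_zero _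
    have hexp : Real.exp (γ z) = (Real.exp (-(γ z)))⁻¹ := by
      rw [← Real.exp_neg, neg_neg]
    rw [hexp]
    field_simp
  -- e^γ T → 0
  have hET : Tendsto (fun z => Real.exp (γ z) * Tl γ z) atTop (𝓝 0) := by
    have h2 : Tendsto (fun z => (q z)⁻¹ * (q z * (Real.exp (γ z) * Tl γ z))) atTop
        (𝓝 (0 * (1/2))) := H2a.inv_tendsto_atTop.mul hu
    rw [zero_mul] at h2
    refine Tendsto.congr' ?_ h2
    filter_upwards [hq_ev] with z hz
    have hQ : q z ≠ 0 := ne_of_gt (lt_of_lt_of_le one_pos hz)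
    field_simp
  -- D → 0
  have hD0 : Tendsto (Dl γ) atTop (𝓝 0) := by
    have h2 : Tendsto (fun z => Real.exp (γ z) * Tl γ z * (Real.exp (γ z) * Tl γ z) * Tl γ z)
        atTop (𝓝 (0 * 0 * 0)) := (hET.mul hET).mul hT0
    norm_num at h2
    refine h2.congr fun z => ?_
    show _ = Dl γ z
    rw [Dl, two_mul, Real.exp_add]; ring
  -- derivative of D
  have hD_deriv : ∀ z, HasDerivAt (Dl γ)
      (Real.exp (2 * γ z) * (2 * (2 * q z)) * Tl γ z ^ 3 +
        Real.exp (2 * γ z) * ((3:ℝ) * Tl γ z ^ 2 * -Real.exp (-(γ z)))) z := by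
    intro z
    have h1 : HasDerivAt (fun w => Real.exp (2 * γ w)) (Real.exp (2 * γ z) * (2 * (2 * q z))) z :=
      ((hγd z).const_mul 2).exp
    have h2 : HasDerivAt (fun w => Tl γ w ^ 3) ((3:ℝ) * Tl γ z ^ 2 * -Real.exp (-(γ z))) z := by
      have := (hT_deriv z).pow 3
      norm_num at this
      exact this.congr_deriv (by ring)
    exact h1.mul h2
  -- identity for D'
  have hDid : ∀ z, Real.exp (2 * γ z) * (2 * (2 * q z)) * Tl γ z ^ 3 +
        Real.exp (2 * γ z) * ((3:ℝ) * Tl γ z ^ 2 * -Real.exp (-(γ z)))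
      = Real.exp (γ z) * Tl γ z ^ 2 * (4 * (q z * (Real.exp (γ z) * Tl γ z)) - 3) := by
    intro z
    have e1 : Real.exp (2 * γ z) = Real.exp (γ z) * Real.exp (γ z) := by
      rw [two_mul, Real.exp_add]
    have e2 : Real.exp (γ z) * Real.exp (-(γ z)) = 1 := by
      rw [← Real.exp_add]; simp
    rw [e1]
    linear_combination (-3 * Real.exp (γ z) * Tl γ z ^ 2) * e2
  have hu_ev : ∀ᶠ z in atTop, q z * (Real.exp (γ z) * Tl γ z) < 5/8 :=
    hu.eventually (gt_mem_nhds (by norm_num))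
  have hD'neg : ∀ᶠ z in atTop, Real.exp (2 * γ z) * (2 * (2 * q z)) * Tl γ z ^ 3 +
        Real.exp (2 * γ z) * ((3:ℝ) * Tl γ z ^ 2 * -Real.exp (-(γ z))) < 0 := by
    filter_upwards [hu_ev] with z hz
    rw [hDid z]
    have hP : 0 < Real.exp (γ z) * Tl γ z ^ 2 :=
      mul_pos (Real.exp_pos _) (pow_pos (hT_pos z) 2)
    have hW : 4 * (q z * (Real.exp (γ z) * Tl γ z)) - 3 < 0 := by linarith
    exact mul_neg_of_pos_of_neg hP hW
  -- the limit of N'/D'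
  have hNDdiv : Tendsto (fun z => -(Real.exp (γ z) * Tl γ z ^ 2) /
      (Real.exp (2 * γ z) * (2 * (2 * q z)) * Tl γ z ^ 3 +
        Real.exp (2 * γ z) * ((3:ℝ) * Tl γ z ^ 2 * -Real.exp (-(γ z))))) atTop (𝓝 1) := by
    have h4 : Tendsto (fun z => 4 * (q z * (Real.exp (γ z) * Tl γ z)) - 3) atTop (𝓝 (-1)) := by
      have := (hu.const_mul 4).sub_const 3
      norm_num at this
      exact this
    have h5 : Tendsto (fun z => -(4 * (q z * (Real.exp (γ z) * Tl γ z)) - 3)⁻¹) atTop (𝓝 1) := by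
      have := (h4.inv₀ (by norm_num)).neg
      norm_num at this
      exact this
    refine Tendsto.congr' ?_ h5
    filter_upwards [hu_ev] with z hz
    rw [hDid z]
    have hP : 0 < Real.exp (γ z) * Tl γ z ^ 2 :=
      mul_pos (Real.exp_pos _) (pow_pos (hT_pos z) 2)
    have hW : 4 * (q z * (Real.exp (γ z) * Tl γ z)) - 3 < 0 := by linarith
    rw [neg_div, div_mul_cancel_left₀ hP.ne']
  exact HasDerivAt.lhopital_zero_atTop
    (f' := fun z => -(Real.exp (γ z) * Tl γ z ^ 2))
    (g' := fun z => Real.exp (2 * γ z) * (2 * (2 * q z)) * Tl γ z ^ 3 +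
        Real.exp (2 * γ z) * ((3:ℝ) * Tl γ z ^ 2 * -Real.exp (-(γ z))))
    (eventually_atTop.2 ⟨1, fun z hz => hN_deriv z (by linarith)⟩)
    (Eventually.of_forall hD_deriv)
    (hD'neg.mono fun z hz => ne_of_lt hz)
    hN0 hD0 hNDdiv
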